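/- Let G be an additive commutative group and let c : Fin r → G be a finite family of elements, with N the additive submonoid of G generated by the c i. Call an element v of a subset V ⊆ G a minimal element of V (with respect to the preorder induced by N) if every w ∈ V with v − w ∈ N satisfies w = v. If b ∈ G and V ⊆ G satisfies v − b ∈ N for every v ∈ V (i.e. V is contained in the translate b + N), then the set of minimal elements of V is finite. -/

import Mathlib

/-- Every element of the closure of the range of `c` is a sum `∑ i, n i • c i`. -/
lemma exists_rep {G : Type*} [AddCommGroup G] {r : ℕ} (c : Fin r → G) {x : G}
    (hx : x ∈ AddSubmonoid.closure (Set.range c)) :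
    ∃ n : Fin r → ℕ, ∑ i, n i • c i = x := by
  induction hx using AddSubmonoid.closure_induction with
  | mem x hx =>
    obtain ⟨i, rfl⟩ := hx
    exact ⟨Pi.single i 1, by simp [Pi.single_apply]⟩
  | zero => exact ⟨0, by simp⟩
  | add x y _ _ hx hy =>
    obtain ⟨n, rfl⟩ := hx
    obtain ⟨m, rfl⟩ := hy
    exact ⟨n + m, by simp [add_smul, Finset.sum_add_distrib]⟩

/-- A subset `V` of a translate `b + N` of the submonoid `N` generated by a finite
family `c : Fin r → G` has only finitely many minimal elements with respect to the
preorder induced by `N` (`a ≤ b` iff `b - a ∈ N`). -/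
theorem stmt2 {G : Type*} [AddCommGroup G] {r : ℕ} (c : Fin r → G)
    (N : AddSubmonoid G) (hN : N = AddSubmonoid.closure (Set.range c))
    (b : G) (V : Set G) (hV : ∀ v ∈ V, v - b ∈ N) :
    {v ∈ V | ∀ w ∈ V, v - w ∈ N → w = v}.Finite := by
  subst hN
  set M := {v ∈ V | ∀ w ∈ V, v - w ∈ AddSubmonoid.closure (Set.range c) → w = v} with hM
  have hrep : ∀ v ∈ M, ∃ n : Fin r → ℕ, ∑ i, n i • c i = v - b := fun v hv =>
    exists_rep c (hV v hv.1)
  choose! n hn using hrep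
  -- key: comparable exponent vectors force equality
  have key : ∀ v ∈ M, ∀ w ∈ M, n v ≤ n w → v = w := by
    intro v hv w hw hle
    have hsum : ∑ i, (n w i - n v i) • c i = w - v := by
      have h1 : ∑ i, (n w i - n v i) • c i + ∑ i, n v i • c i = ∑ i, n w i • c i := by
        rw [← Finset.sum_add_distrib]
        exact Finset.sum_congr rfl fun i _ => by
          rw [← add_smul, Nat.sub_add_cancel (hle i)]
      rw [hn v hv, hn w hw] at h1
      have := eq_sub_of_add_eq h1
      rw [this]; abel
    have hmem : w - v ∈ AddSubmonoid.closure (Set.range c) := by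
      rw [← hsum]
      exact AddSubmonoid.sum_mem _ fun i _ =>
        AddSubmonoid.nsmul_mem _ (AddSubmonoid.subset_closure (Set.mem_range_self i)) _
    exact hw.2 v hv.1 hmem
  have hinj : Set.InjOn n M := fun v hv w hw h => key v hv w hw (le_of_eq h)
  have hanti : IsAntichain (· ≤ ·) (n '' M) := by
    rintro _ ⟨v, hv, rfl⟩ _ ⟨w, hw, rfl⟩ hne hle
    exact hne (congrArg n (key v hv w hw hle))
  have hfin : (n '' M).Finite := by
    exact hanti.finite_of_partiallyWellOrderedOn
      (Set.isPWO_of_wellQuasiOrderedLE (n '' M))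
  exact Set.Finite.of_finite_image hfin hinj
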